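/- Let G be a pseudo strongly regular graph containing two non-incident (vertex-disjoint) edges. Then the line graph L(G) is pseudo strongly regular with parameter μ = 2 if and only if every two adjacent vertices of G have at most one common neighbour (i.e., G is (diamond, K₄)-free) and every two non-incident edges of G lie on a common 4-cycle. -/

import Mathlib

open SimpleGraph

def SimpleGraph.IsPseudoSRG {V : Type*} [Fintype V] (G : SimpleGraph V) (n k m : ℕ) : Prop :=
  Fintype.card V = n ∧ (∀ v : V, (G.neighborSet v).ncard = k) ∧
    ∀ u v : V, u ≠ v → ¬G.Adj u v → (G.commonNeighbors u v).ncard = m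

namespace Stmt13

variable {V : Type*} [DecidableEq V] {G : SimpleGraph V}

lemma three_le_ncard {α : Type*} {x y z : α} {S : Set α} (hS : S.Finite)
    (hx : x ∈ S) (hy : y ∈ S) (hz : z ∈ S) (hxy : x ≠ y) (hxz : x ≠ z) (hyz : y ≠ z) :
    3 ≤ S.ncard := by
  have h1 : ({x, y, z} : Set α).ncard ≤ S.ncard :=
    Set.ncard_le_ncard (by simp [Set.insert_subset_iff, hx, hy, hz]) hS
  have h2 : ({x, y, z} : Set α).ncard = 3 := by
    rw [Set.ncard_insert_of_notMem (by simp [hxy, hxz]) (Set.toFinite _),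
      Set.ncard_pair hyz]
  omega

lemma two_le_ncard {α : Type*} {x y : α} {S : Set α} (hS : S.Finite)
    (hx : x ∈ S) (hy : y ∈ S) (hxy : x ≠ y) : 2 ≤ S.ncard := by
  have h1 : ({x, y} : Set α).ncard ≤ S.ncard :=
    Set.ncard_le_ncard (by simp [Set.insert_subset_iff, hx, hy]) hS
  rw [Set.ncard_pair hxy] at h1
  exact h1

/-- The set of "connecting edges" between edges `{a,b}` and `{c,d}`. -/
def conn (G : SimpleGraph V) (a b c d : V) : Set (Sym2 V) :=
  {z | (z = s(a,c) ∨ z = s(a,d) ∨ z = s(b,c) ∨ z = s(b,d)) ∧ z ∈ G.edgeSet}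

lemma mem_conn {a b c d : V} {z : Sym2 V} :
    z ∈ conn G a b c d ↔ (z = s(a,c) ∨ z = s(a,d) ∨ z = s(b,c) ∨ z = s(b,d)) ∧ z ∈ G.edgeSet :=
  Iff.rfl

lemma conn_comm₁ {a b c d : V} : conn G a b c d = conn G b a c d := by
  ext z; rw [mem_conn, mem_conn]; tauto

lemma conn_comm₂ {a b c d : V} : conn G a b c d = conn G a b d c := by
  ext z; rw [mem_conn, mem_conn]; tauto

lemma lg_adj_mk {z w : Sym2 V} (hz : z ∈ G.edgeSet) (hw : w ∈ G.edgeSet) :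
    G.lineGraph.Adj ⟨z, hz⟩ ⟨w, hw⟩ ↔ z ≠ w ∧ ∃ v, v ∈ z ∧ v ∈ w := by
  rw [lineGraph_adj_iff_exists]
  simp [Subtype.ext_iff]

lemma common_image {a b c d : V} (hab : G.Adj a b) (hcd : G.Adj c d)
    (hac : a ≠ c) (had : a ≠ d) (hbc : b ≠ c) (hbd : b ≠ d) :
    Subtype.val '' (G.lineGraph.commonNeighbors ⟨s(a,b), hab⟩ ⟨s(c,d), hcd⟩) =
      conn G a b c d := by
  have hab' : a ≠ b := G.ne_of_adj hab
  have hcd' : c ≠ d := G.ne_of_adj hcd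
  ext z
  simp only [Set.mem_image, mem_commonNeighbors]
  constructor
  · rintro ⟨⟨z, hz⟩, ⟨h1, h2⟩, rfl⟩
    replace h1 := (lg_adj_mk hab hz).mp h1
    replace h2 := (lg_adj_mk hcd hz).mp h2
    obtain ⟨hne1, w1, hw1, hw1'⟩ := h1
    obtain ⟨hne2, w2, hw2, hw2'⟩ := h2
    rw [Sym2.mem_iff] at hw1 hw2
    refine ⟨?_, hz⟩
    rcases hw1 with rfl | rfl <;> rcases hw2 with rfl | rfl
    · exact Or.inl ((Sym2.mem_and_mem_iff hac).mp ⟨hw1', hw2'⟩)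
    · exact Or.inr (Or.inl ((Sym2.mem_and_mem_iff had).mp ⟨hw1', hw2'⟩))
    · exact Or.inr (Or.inr (Or.inl ((Sym2.mem_and_mem_iff hbc).mp ⟨hw1', hw2'⟩)))
    · exact Or.inr (Or.inr (Or.inr ((Sym2.mem_and_mem_iff hbd).mp ⟨hw1', hw2'⟩)))
  · rintro ⟨hm, hz⟩
    refine ⟨⟨z, hz⟩, ⟨?_, ?_⟩, rfl⟩ <;> apply (lg_adj_mk _ hz).mpr <;>
      rcases hm with rfl | rfl | rfl | rfl <;>
      refine ⟨?_, ?_⟩ <;>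
      simp [Sym2.eq_iff, Sym2.mem_iff] <;> tauto

end Stmt13

namespace Stmt13
set_option linter.unusedSectionVars false

variable {V : Type*} [DecidableEq V] {G : SimpleGraph V}

lemma ncard_le_one_of_subset_singleton {α : Type*} {S : Set α} {x : α} (h : S ⊆ {x}) :
    S.ncard ≤ 1 := by
  have := Set.ncard_le_ncard h (Set.finite_singleton x)
  simpa using this

lemma conn_ncard {a b c d : V}
    (hL : ∀ e₁ e₂ : G.edgeSet, e₁ ≠ e₂ → ¬G.lineGraph.Adj e₁ e₂ →
      (G.lineGraph.commonNeighbors e₁ e₂).ncard = 2)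
    (hab : G.Adj a b) (hcd : G.Adj c d)
    (hac : a ≠ c) (had : a ≠ d) (hbc : b ≠ c) (hbd : b ≠ d) :
    (conn G a b c d).ncard = 2 := by
  have hne : (⟨s(a,b), hab⟩ : G.edgeSet) ≠ ⟨s(c,d), hcd⟩ := by
    simp only [ne_eq, Subtype.mk.injEq, Sym2.eq_iff]
    push_neg
    intro h
    have := congrArg Subtype.val h
    change s(a,b) = s(c,d) at this
    rcases Sym2.eq_iff.mp this with ⟨h, -⟩ | ⟨h, -⟩
    exacts [hac h, had h]
  have hnadj : ¬G.lineGraph.Adj ⟨s(a,b), hab⟩ ⟨s(c,d), hcd⟩ := by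
    intro hadj
    obtain ⟨-, v, hv1, hv2⟩ := (lg_adj_mk hab hcd).mp hadj
    rw [Sym2.mem_iff] at hv1 hv2
    rcases hv1 with rfl | rfl <;> rcases hv2 with rfl | rfl <;> simp_all
  rw [← common_image hab hcd hac had hbc hbd,
    Set.ncard_image_of_injective _ Subtype.val_injective]
  exact hL _ _ hne hnadj

variable [Fintype V]

lemma cond_a
    (hW : ∀ a b c d : V, G.Adj a b → G.Adj c d → a ≠ c → a ≠ d → b ≠ c → b ≠ d →
      (conn G a b c d).ncard = 2) :
    ∀ u v : V, G.Adj u v → (G.commonNeighbors u v).ncard ≤ 1 := by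
  intro u v huv
  by_contra hcon
  push_neg at hcon
  obtain ⟨w₁, w₂, hw₁, hw₂, hne⟩ := (Set.one_lt_ncard_iff (Set.toFinite _)).mp hcon
  rw [mem_commonNeighbors] at hw₁ hw₂
  obtain ⟨h₁u, h₁v⟩ := hw₁
  obtain ⟨h₂u, h₂v⟩ := hw₂
  have huv' : u ≠ v := G.ne_of_adj huv
  have h2 := hW u w₁ v w₂ h₁u h₂v huv' (G.ne_of_adj h₂u) (fun h => (G.ne_of_adj h₁v) h.symm) hne
  have h3 : 3 ≤ (conn G u w₁ v w₂).ncard := by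
    refine three_le_ncard (Set.toFinite _)
      (x := s(u,v)) (y := s(u,w₂)) (z := s(w₁,v)) ⟨Or.inl rfl, G.mem_edgeSet.mpr huv⟩
      ⟨Or.inr (Or.inl rfl), G.mem_edgeSet.mpr h₂u⟩
      ⟨Or.inr (Or.inr (Or.inl rfl)), G.mem_edgeSet.mpr h₁v.symm⟩ ?_ ?_ ?_
    · rw [Ne, Sym2.eq_iff]
      rintro (⟨-, h⟩ | ⟨h, -⟩)
      exacts [G.ne_of_adj h₂v h, G.ne_of_adj h₂u h]
    · rw [Ne, Sym2.eq_iff]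
      rintro (h | h)
      exacts [G.ne_of_adj h₁u h.1, huv' h.1]
    · rw [Ne, Sym2.eq_iff]
      rintro (h | h)
      exacts [G.ne_of_adj h₁u h.1, huv' h.1]
  omega

end Stmt13

namespace Stmt13
set_option linter.unusedSectionVars false

variable {V : Type*} [DecidableEq V] [Fintype V] {G : SimpleGraph V}

lemma bad_case {a b c d : V}
    (hW : ∀ a b c d : V, G.Adj a b → G.Adj c d → a ≠ c → a ≠ d → b ≠ c → b ≠ d →
      (conn G a b c d).ncard = 2)
    (hdeg : ∀ v w : V, (G.neighborSet v).ncard = (G.neighborSet w).ncard)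
    (hA : ∀ u v : V, G.Adj u v → (G.commonNeighbors u v).ncard ≤ 1)
    (hab : G.Adj a b) (hcd : G.Adj c d) (hac : a ≠ c) (had : a ≠ d) (hbc : b ≠ c) (hbd : b ≠ d)
    (h1 : G.Adj a c) (h2 : G.Adj a d) (h3 : ¬G.Adj b c) (h4 : ¬G.Adj b d) : False := by
  have hab' : a ≠ b := G.ne_of_adj hab
  have hcd' : c ≠ d := G.ne_of_adj hcd
  have key : ∀ x : V, G.Adj b x → x = a ∨ G.Adj a x := by
    intro x hbx
    by_cases hxa : x = a
    · exact Or.inl hxa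
    right
    by_contra hax
    have hxc : G.Adj c x := by
      by_contra hcx
      have h5 := hW a c b x h1 hbx hab' (fun h => hxa h.symm) (Ne.symm hbc)
        (fun h => h3 (by rwa [← h] at hbx))
      have hsub : conn G a c b x ⊆ {s(a,b)} := by
        rintro z ⟨rfl | rfl | rfl | rfl, hz⟩
        · rfl
        · exact absurd (G.mem_edgeSet.mp hz) hax
        · exact absurd (G.mem_edgeSet.mp hz).symm h3
        · exact absurd (G.mem_edgeSet.mp hz) hcx
      have := ncard_le_one_of_subset_singleton hsub
      omega
    have hxd : G.Adj d x := by
      by_contra hdx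
      have h5 := hW a d b x h2 hbx hab' (fun h => hxa h.symm) (Ne.symm hbd)
        (fun h => h4 (by rwa [← h] at hbx))
      have hsub : conn G a d b x ⊆ {s(a,b)} := by
        rintro z ⟨rfl | rfl | rfl | rfl, hz⟩
        · rfl
        · exact absurd (G.mem_edgeSet.mp hz) hax
        · exact absurd (G.mem_edgeSet.mp hz).symm h4
        · exact absurd (G.mem_edgeSet.mp hz) hdx
      have := ncard_le_one_of_subset_singleton hsub
      omega
    have h6 : 2 ≤ (G.commonNeighbors c d).ncard := by
      refine two_le_ncard (Set.toFinite _) (x := a) (y := x) ?_ ?_ (fun h => hxa h.symm)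
      · rw [mem_commonNeighbors]; exact ⟨h1.symm, h2.symm⟩
      · rw [mem_commonNeighbors]; exact ⟨hxc, hxd⟩
    have := hA c d hcd
    omega
  have hsubb : G.neighborSet b ⊆ insert a (G.commonNeighbors a b) := by
    intro x hx
    rw [mem_neighborSet] at hx
    rcases key x hx with rfl | hax
    · exact Set.mem_insert _ _
    · exact Set.mem_insert_of_mem _ (by rw [mem_commonNeighbors]; exact ⟨hax, hx⟩)
  have hble : (G.neighborSet b).ncard ≤ 2 := by
    have hh1 := Set.ncard_le_ncard hsubb (Set.toFinite _)
    have hh2 := Set.ncard_insert_le a (G.commonNeighbors a b)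
    have hh3 := hA a b hab
    omega
  have ha3 : 3 ≤ (G.neighborSet a).ncard := by
    refine three_le_ncard (Set.toFinite _) (x := b) (y := c) (z := d) ?_ ?_ ?_ hbc hbd hcd' <;>
      rw [mem_neighborSet]
    exacts [hab, h1, h2]
  have := hdeg a b
  omega

lemma lg_degree {k : ℕ} (hreg : ∀ v : V, (G.neighborSet v).ncard = k) (e : G.edgeSet) :
    (G.lineGraph.neighborSet e).ncard = 2 * k - 2 := by
  obtain ⟨z, hz⟩ := e
  induction z using Sym2.ind with
  | _ u v =>
  have huv : G.Adj u v := hz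
  have huv' : u ≠ v := G.ne_of_adj huv
  have himg : Subtype.val '' (G.lineGraph.neighborSet ⟨s(u,v), hz⟩) =
      (fun x => s(u,x)) '' (G.neighborSet u \ {v}) ∪
        (fun x => s(v,x)) '' (G.neighborSet v \ {u}) := by
    ext z
    simp only [Set.mem_image, Set.mem_union, mem_neighborSet, Set.mem_diff,
      Set.mem_singleton_iff]
    constructor
    · rintro ⟨⟨z, hze⟩, hadj, rfl⟩
      rw [lg_adj_mk] at hadj
      obtain ⟨hne, w, hw1, hw2⟩ := hadj
      rw [Sym2.mem_iff] at hw1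
      rcases hw1 with rfl | rfl
      · left
        have hzy : s(w, Sym2.Mem.other hw2) = z := Sym2.other_spec hw2
        have hadjy : G.Adj w (Sym2.Mem.other hw2) := G.mem_edgeSet.mp (by rw [hzy]; exact hze)
        exact ⟨Sym2.Mem.other hw2, ⟨hadjy, fun h => hne (by rw [← hzy, h])⟩, hzy⟩
      · right
        have hzy : s(w, Sym2.Mem.other hw2) = z := Sym2.other_spec hw2
        have hadjy : G.Adj w (Sym2.Mem.other hw2) := G.mem_edgeSet.mp (by rw [hzy]; exact hze)
        refine ⟨Sym2.Mem.other hw2, ⟨hadjy, fun h => hne ?_⟩, hzy⟩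
        rw [← hzy, h, Sym2.eq_swap]
    · rintro (⟨x, ⟨hx, hxv⟩, rfl⟩ | ⟨x, ⟨hx, hxu⟩, rfl⟩)
      · refine ⟨⟨s(u,x), G.mem_edgeSet.mpr hx⟩, ?_, rfl⟩
        rw [lg_adj_mk]
        refine ⟨?_, u, by simp, by simp⟩
        rw [Ne, Sym2.eq_iff]
        rintro (⟨-, h⟩ | ⟨h, -⟩)
        exacts [hxv h.symm, G.ne_of_adj hx h]
      · refine ⟨⟨s(v,x), G.mem_edgeSet.mpr hx⟩, ?_, rfl⟩
        rw [lg_adj_mk]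
        refine ⟨?_, v, by simp, by simp⟩
        rw [Ne, Sym2.eq_iff]
        rintro (⟨h, -⟩ | ⟨h, -⟩)
        exacts [huv' h, hxu h.symm]
  have hinj1 : Function.Injective (fun x : V => s(u,x)) := by
    intro x y h
    rcases Sym2.eq_iff.mp h with ⟨-, h⟩ | ⟨h1, h2⟩
    · exact h
    · rw [h2, ← h1]
  have hinj2 : Function.Injective (fun x : V => s(v,x)) := by
    intro x y h
    rcases Sym2.eq_iff.mp h with ⟨-, h⟩ | ⟨h1, h2⟩
    · exact h
    · rw [h2, ← h1]
  have hdisj : Disjoint ((fun x => s(u,x)) '' (G.neighborSet u \ {v}))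
      ((fun x => s(v,x)) '' (G.neighborSet v \ {u})) := by
    rw [Set.disjoint_left]
    rintro z ⟨x, hx, rfl⟩ ⟨y, hy, hyx⟩
    rcases Sym2.eq_iff.mp hyx with ⟨h1, -⟩ | ⟨h1, -⟩
    · exact huv' h1.symm
    · exact hx.2 h1.symm
  have hk : 1 ≤ k := by
    have h0 : 0 < (G.neighborSet u).ncard := (Set.ncard_pos (Set.toFinite _)).mpr ⟨v, huv⟩
    rw [hreg u] at h0
    omega
  have hfin : ((fun x => s(u,x)) '' (G.neighborSet u \ {v})).Finite := Set.toFinite _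
  have hfin2 : ((fun x => s(v,x)) '' (G.neighborSet v \ {u})).Finite := Set.toFinite _
  have hcount := Set.ncard_union_eq hdisj hfin hfin2
  rw [← Set.ncard_image_of_injective _ Subtype.val_injective, himg, hcount,
    Set.ncard_image_of_injective _ hinj1, Set.ncard_image_of_injective _ hinj2,
    Set.ncard_diff_singleton_of_mem (s := G.neighborSet u) huv,
    Set.ncard_diff_singleton_of_mem (s := G.neighborSet v) huv.symm, hreg u, hreg v]
  omega
end Stmt13

namespace Stmt13
set_option linter.unusedSectionVars false

variable {V : Type*} [DecidableEq V] [Fintype V] {G : SimpleGraph V}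

lemma mu_case {a b c d : V}
    (hA : ∀ u v : V, G.Adj u v → (G.commonNeighbors u v).ncard ≤ 1)
    (hab : G.Adj a b) (hcd : G.Adj c d)
    (hac : a ≠ c) (had : a ≠ d) (hbc : b ≠ c) (hbd : b ≠ d)
    (h1 : G.Adj a c) (h2 : G.Adj b d) :
    (G.lineGraph.commonNeighbors ⟨s(a,b), hab⟩ ⟨s(c,d), hcd⟩).ncard = 2 := by
  have hab' : a ≠ b := G.ne_of_adj hab
  have hcd' : c ≠ d := G.ne_of_adj hcd
  have hnad : ¬G.Adj a d := by
    intro h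
    have hle := hA a d h
    have : 2 ≤ (G.commonNeighbors a d).ncard := by
      refine two_le_ncard (Set.toFinite _) (x := c) (y := b) ?_ ?_ (Ne.symm hbc)
      · rw [mem_commonNeighbors]; exact ⟨h1, hcd.symm⟩
      · rw [mem_commonNeighbors]; exact ⟨hab, h2.symm⟩
    omega
  have hnbc : ¬G.Adj b c := by
    intro h
    have hle := hA b c h
    have : 2 ≤ (G.commonNeighbors b c).ncard := by
      refine two_le_ncard (Set.toFinite _) (x := a) (y := d) ?_ ?_ had
      · rw [mem_commonNeighbors]; exact ⟨hab.symm, h1.symm⟩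
      · rw [mem_commonNeighbors]; exact ⟨h2, hcd⟩
    omega
  have hpair : conn G a b c d = {s(a,c), s(b,d)} := by
    ext z
    rw [mem_conn]
    constructor
    · rintro ⟨rfl | rfl | rfl | rfl, hz⟩
      · exact Or.inl rfl
      · exact absurd (G.mem_edgeSet.mp hz) hnad
      · exact absurd (G.mem_edgeSet.mp hz) hnbc
      · exact Or.inr rfl
    · rintro (rfl | rfl)
      · exact ⟨Or.inl rfl, G.mem_edgeSet.mpr h1⟩
      · exact ⟨Or.inr (Or.inr (Or.inr rfl)), G.mem_edgeSet.mpr h2⟩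
  rw [← Set.ncard_image_of_injective _ Subtype.val_injective,
    common_image hab hcd hac had hbc hbd, hpair]
  refine Set.ncard_pair ?_
  rw [Ne, Sym2.eq_iff]
  rintro (⟨h, -⟩ | ⟨h, -⟩)
  exacts [hab' h, had h]

end Stmt13

theorem stmt_13 {V : Type*} [Fintype V] [DecidableEq V] (G : SimpleGraph V) [DecidableRel G.Adj]
    (n k μ : ℕ) (hG : G.IsPseudoSRG n k μ)
    (hne : ∃ a b c d : V, G.Adj a b ∧ G.Adj c d ∧ a ≠ c ∧ a ≠ d ∧ b ≠ c ∧ b ≠ d) :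
    (∃ m d : ℕ, G.lineGraph.IsPseudoSRG m d 2) ↔
      ((∀ u v : V, G.Adj u v → (G.commonNeighbors u v).ncard ≤ 1) ∧
        ∀ a b c d : V, G.Adj a b → G.Adj c d → a ≠ c → a ≠ d → b ≠ c → b ≠ d →
          ((G.Adj a c ∧ G.Adj b d) ∨ (G.Adj a d ∧ G.Adj b c))) := by
  obtain ⟨-, hreg, -⟩ := hG
  constructor
  · rintro ⟨m, dd, -, -, hL⟩
    have hW : ∀ a b c d : V, G.Adj a b → G.Adj c d → a ≠ c → a ≠ d → b ≠ c → b ≠ d →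
        (Stmt13.conn G a b c d).ncard = 2 := fun a b c d hab hcd h1 h2 h3 h4 =>
      Stmt13.conn_ncard hL hab hcd h1 h2 h3 h4
    have hA := Stmt13.cond_a hW
    have hdeg : ∀ v w : V, (G.neighborSet v).ncard = (G.neighborSet w).ncard :=
      fun v w => (hreg v).trans (hreg w).symm
    refine ⟨hA, ?_⟩
    intro a b c d hab hcd hac had hbc hbd
    have h2 := hW a b c d hab hcd hac had hbc hbd
    by_cases H1 : G.Adj a c <;> by_cases H2 : G.Adj a d <;>
      by_cases H3 : G.Adj b c <;> by_cases H4 : G.Adj b d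
    · exact Or.inl ⟨H1, H4⟩
    · exact Or.inr ⟨H2, H3⟩
    · exact Or.inl ⟨H1, H4⟩
    · exact absurd (Stmt13.bad_case hW hdeg hA hab hcd hac had hbc hbd H1 H2 H3 H4) not_false
    · exact Or.inl ⟨H1, H4⟩
    · exact absurd (Stmt13.bad_case hW hdeg hA hcd hab (Ne.symm hac) (Ne.symm hbc)
        (Ne.symm had) (Ne.symm hbd) H1.symm H3.symm (fun h => H2 h.symm) (fun h => H4 h.symm))
        not_false
    · exact Or.inl ⟨H1, H4⟩
    · exfalso
      have hsub : Stmt13.conn G a b c d ⊆ {s(a,c)} := by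
        rintro z ⟨rfl | rfl | rfl | rfl, hz⟩
        · rfl
        · exact absurd (G.mem_edgeSet.mp hz) H2
        · exact absurd (G.mem_edgeSet.mp hz) H3
        · exact absurd (G.mem_edgeSet.mp hz) H4
      have := Stmt13.ncard_le_one_of_subset_singleton hsub
      omega
    · exact Or.inr ⟨H2, H3⟩
    · exact Or.inr ⟨H2, H3⟩
    · exact absurd (Stmt13.bad_case hW hdeg hA hcd.symm hab (Ne.symm had) (Ne.symm hbd)
        (Ne.symm hac) (Ne.symm hbc) H2.symm H4.symm (fun h => H1 h.symm) (fun h => H3 h.symm))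
        not_false
    · exfalso
      have hsub : Stmt13.conn G a b c d ⊆ {s(a,d)} := by
        rintro z ⟨rfl | rfl | rfl | rfl, hz⟩
        · exact absurd (G.mem_edgeSet.mp hz) H1
        · rfl
        · exact absurd (G.mem_edgeSet.mp hz) H3
        · exact absurd (G.mem_edgeSet.mp hz) H4
      have := Stmt13.ncard_le_one_of_subset_singleton hsub
      omega
    · exact absurd (Stmt13.bad_case hW hdeg hA hab.symm hcd hbc hbd hac had H3 H4 H1 H2) not_false
    · exfalso
      have hsub : Stmt13.conn G a b c d ⊆ {s(b,c)} := by
        rintro z ⟨rfl | rfl | rfl | rfl, hz⟩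
        · exact absurd (G.mem_edgeSet.mp hz) H1
        · exact absurd (G.mem_edgeSet.mp hz) H2
        · rfl
        · exact absurd (G.mem_edgeSet.mp hz) H4
      have := Stmt13.ncard_le_one_of_subset_singleton hsub
      omega
    · exfalso
      have hsub : Stmt13.conn G a b c d ⊆ {s(b,d)} := by
        rintro z ⟨rfl | rfl | rfl | rfl, hz⟩
        · exact absurd (G.mem_edgeSet.mp hz) H1
        · exact absurd (G.mem_edgeSet.mp hz) H2
        · exact absurd (G.mem_edgeSet.mp hz) H3
        · rfl
      have := Stmt13.ncard_le_one_of_subset_singleton hsub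
      omega
    · exfalso
      have hsub : Stmt13.conn G a b c d ⊆ {s(a,c)} := by
        rintro z ⟨rfl | rfl | rfl | rfl, hz⟩
        · exact absurd (G.mem_edgeSet.mp hz) H1
        · exact absurd (G.mem_edgeSet.mp hz) H2
        · exact absurd (G.mem_edgeSet.mp hz) H3
        · exact absurd (G.mem_edgeSet.mp hz) H4
      have := Stmt13.ncard_le_one_of_subset_singleton hsub
      omega
  · rintro ⟨hA, hB⟩
    refine ⟨Fintype.card G.edgeSet, 2 * k - 2, rfl, Stmt13.lg_degree hreg, ?_⟩
    have key : ∀ (z1 : Sym2 V) (h1 : z1 ∈ G.edgeSet) (z2 : Sym2 V) (h2 : z2 ∈ G.edgeSet),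
        (⟨z1, h1⟩ : G.edgeSet) ≠ ⟨z2, h2⟩ → ¬G.lineGraph.Adj ⟨z1, h1⟩ ⟨z2, h2⟩ →
        (G.lineGraph.commonNeighbors ⟨z1, h1⟩ ⟨z2, h2⟩).ncard = 2 := by
      intro z1
      induction z1 using Sym2.ind with
      | _ a b =>
      intro h1 z2
      induction z2 using Sym2.ind with
      | _ c d =>
      intro h2 hne hnadj
      have hab : G.Adj a b := h1
      have hcd : G.Adj c d := h2
      rw [Stmt13.lg_adj_mk] at hnadj
      push_neg at hnadj
      have hzz : s(a,b) ≠ s(c,d) := fun h => hne (Subtype.ext h)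
      have h' := hnadj hzz
      simp only [Sym2.mem_iff] at h'
      have hac : a ≠ c := fun h => h' a (Or.inl rfl) (Or.inl h)
      have had : a ≠ d := fun h => h' a (Or.inl rfl) (Or.inr h)
      have hbc : b ≠ c := fun h => h' b (Or.inr rfl) (Or.inl h)
      have hbd : b ≠ d := fun h => h' b (Or.inr rfl) (Or.inr h)
      rcases hB a b c d hab hcd hac had hbc hbd with ⟨h1', h2'⟩ | ⟨h1', h2'⟩
      · exact Stmt13.mu_case hA hab hcd hac had hbc hbd h1' h2'
      · have hswap : (⟨s(c,d), h2⟩ : G.edgeSet) = ⟨s(d,c), by rw [Sym2.eq_swap]; exact h2⟩ :=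
          Subtype.ext (Sym2.eq_swap).symm
        rw [hswap]
        exact Stmt13.mu_case hA hab hcd.symm had hac hbd hbc h1' h2'
    rintro ⟨z1, h1⟩ ⟨z2, h2⟩ hne hnadj
    exact key z1 h1 z2 h2 hne hnadj
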